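/- Under the same transformation-law hypotheses (d·m_x(r) = m_{fx}(|λ_x| r), m_x(1) = 1, |λ_x| ≥ κ > 1 for all x ∈ S), for every x ∈ S and every 0 < r < 1 one has m_x(r) ≥ r^β / d, where β = log d / log κ. -/

import Mathlib

/-- Proposition 1.5: under the transformation law `d·m_x(r) = m_{fx}(|λ_x| r)` with
`m_x(1) = 1` and `|λ_x| ≥ κ > 1`, for every `0 < r < 1` one has
`m_x(r) ≥ r^β / d` where `β = log d / log κ`. -/
theorem stmt3 {S : Type*} (f : S ≃ S) (m : S → ℝ → ℝ) (lam : S → ℂ)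
    (d κ : ℝ) (hd : 1 < d) (hκ : 1 < κ)
    (hcont : ∀ x, Continuous (m x)) (hmono : ∀ x, Monotone (m x))
    (hnonneg : ∀ x r, 0 ≤ m x r)
    (h0 : ∀ x, m x 0 = 0) (h1 : ∀ x, m x 1 = 1)
    (hlam : ∀ x, κ ≤ ‖lam x‖)
    (htrans : ∀ x r, d * m x r = m (f x) (‖lam x‖ * r)) :
    ∀ x, ∀ r : ℝ, 0 < r → r < 1 →
      r ^ (Real.log d / Real.log κ) / d ≤ m x r := by
  intro x r hr hr1
  have hd0 : (0:ℝ) < d := by linarith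
  have hκ0 : (0:ℝ) < κ := by linarith
  have hlogκ : 0 < Real.log κ := Real.log_pos hκ
  have hlogd : 0 < Real.log d := Real.log_pos hd
  have hr' : (1:ℝ) < 1 / r := (one_lt_div hr).2 hr1
  set a := Real.log (1/r) / Real.log κ with ha
  have ha0 : 0 < a := div_pos (Real.log_pos hr') hlogκ
  set n := ⌈a⌉₊ with hn
  -- key iteration
  have key : ∀ k : ℕ, ∀ y : S, ∀ s : ℝ, 0 ≤ s → 1 ≤ κ ^ k * s → 1 ≤ d ^ k * m y s := by
    intro k
    induction k with
    | zero =>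
      intro y s hs h
      simp only [pow_zero, one_mul] at h ⊢
      calc (1:ℝ) = m y 1 := (h1 y).symm
        _ ≤ m y s := hmono y h
    | succ k ih =>
      intro y s hs h
      have habs : 0 < ‖lam y‖ := lt_of_lt_of_le hκ0 (hlam y)
      have heq : d ^ (k+1) * m y s = d ^ k * (d * m y s) := by ring
      rw [heq, htrans y s]
      apply ih (f y) _ (by positivity)
      calc (1:ℝ) ≤ κ ^ (k+1) * s := h
        _ = κ ^ k * (κ * s) := by ring
        _ ≤ κ ^ k * (‖lam y‖ * s) := by
            apply mul_le_mul_of_nonneg_left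
              (mul_le_mul_of_nonneg_right (hlam y) hs) (by positivity)
  have hκn : 1 ≤ κ ^ n * r := by
    have h1' : a ≤ (n:ℝ) := Nat.le_ceil a
    have hlog : Real.log (1/r) ≤ (n:ℝ) * Real.log κ := by
      rw [ha, div_le_iff₀ hlogκ] at h1'; linarith
    have : 1/r ≤ κ ^ n := by
      have hiff := Real.log_le_log_iff (by positivity : (0:ℝ) < 1/r) (by positivity : (0:ℝ) < κ ^ n)
      exact hiff.1 (by rwa [Real.log_pow])
    exact (div_le_iff₀ hr).1 this
  have hkey := key n x r hr.le hκn
  have hmxr : (d ^ n)⁻¹ ≤ m x r := by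
    rw [inv_le_iff_one_le_mul₀ (by positivity)]
    linarith [hkey]
  refine le_trans ?_ hmxr
  -- r ^ β / d ≤ (d^n)⁻¹
  have hceil : (n:ℝ) < a + 1 := by
    exact_mod_cast Nat.ceil_lt_add_one ha0.le
  have hlogr : Real.log r < 0 := Real.log_neg hr hr1
  have hlog1r : Real.log (1/r) = -Real.log r := by
    rw [one_div, Real.log_inv]
  have hβ : Real.log d / Real.log κ * Real.log r ≤ (1 - (n:ℝ)) * Real.log d := by
    have hna : (n:ℝ) - 1 < a := by linarith
    have : ((n:ℝ) - 1) * Real.log κ < -Real.log r := by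
      rw [ha, lt_div_iff₀ hlogκ] at hna; linarith [hlog1r ▸ hna]
    have hβpos : 0 < Real.log d / Real.log κ := div_pos hlogd hlogκ
    have := mul_le_mul_of_nonneg_left (le_of_lt this) hβpos.le
    have hdk : Real.log d / Real.log κ * Real.log κ = Real.log d := by
      field_simp
    nlinarith [this, hdk]
  have hrpow : r ^ (Real.log d / Real.log κ) ≤ d * (d ^ n)⁻¹ := by
    rw [Real.rpow_def_of_pos hr]
    have : d * (d ^ n)⁻¹ = Real.exp ((1 - (n:ℝ)) * Real.log d) := by
      rw [sub_mul, one_mul, Real.exp_sub, Real.exp_log hd0]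
      congr 1
      rw [← Real.log_pow, Real.exp_log (by positivity)]
    rw [this]
    exact Real.exp_le_exp.2 (by linarith [mul_comm (Real.log r) (Real.log d / Real.log κ)])
  rw [div_le_iff₀ hd0]
  linarith [hrpow]
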